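/- There exists a bistochastic matrix Λ mapping probability vector p to q if and only if p majorizes q, i.e., for all k, the sum of the k largest entries of p is at least the sum of the k largest entries of q. -/

import Mathlib

open Finset

/-- `p` is a probability vector: nonnegative entries summing to 1. -/
def IsProbVec {d : ℕ} (p : Fin d → ℝ) : Prop :=
  (∀ i, 0 ≤ p i) ∧ ∑ i, p i = 1

/-- Sum of the `k` largest entries of `p` (first `k` entries of the
nonincreasing rearrangement of `p`). -/
noncomputable def topSum {d : ℕ} (p : Fin d → ℝ) (k : ℕ) : ℝ :=
  ∑ i ∈ Finset.univ.filter (fun i : Fin d => (i : ℕ) < k),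
    p (Tuple.sort (fun i => -p i) i)

/-- `p` majorizes `q`. -/
def Majorizes {d : ℕ} (p q : Fin d → ℝ) : Prop :=
  ∀ k : ℕ, k ≤ d → topSum q k ≤ topSum p k

/-- A bistochastic (doubly stochastic) matrix. -/
def IsBistochastic {d : ℕ} (Λ : Matrix (Fin d) (Fin d) ℝ) : Prop :=
  (∀ i j, 0 ≤ Λ i j) ∧ (∀ i, ∑ j, Λ i j = 1) ∧ (∀ j, ∑ i, Λ i j = 1)


variable {d : ℕ}

noncomputable def sortPerm (p : Fin d → ℝ) : Equiv.Perm (Fin d) := Tuple.sort (fun i => -p i)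

lemma antitone_sorted (p : Fin d → ℝ) : Antitone (p ∘ sortPerm p) := by
  intro i j hij
  have := Tuple.monotone_sort (fun i => -p i) hij
  simpa [sortPerm, Function.comp] using this

/-- extension of sorted vector to ℕ by 0 -/
noncomputable def fext (p : Fin d → ℝ) : ℕ → ℝ :=
  fun n => if h : n < d then p (sortPerm p ⟨n, h⟩) else 0

lemma sum_fin_eq_sum_range (g : Fin d → ℝ) :
    ∑ i, g i = ∑ n ∈ Finset.range d, (fun n => if h : n < d then g ⟨n, h⟩ else 0) n := by
  rw [← Fin.sum_univ_eq_sum_range (fun n => if h : n < d then g ⟨n, h⟩ else 0) d]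
  exact Finset.sum_congr rfl fun i _ => by simp [i.isLt]

lemma topSum_eq (p : Fin d → ℝ) (k : ℕ) (hk : k ≤ d) :
    topSum p k = ∑ n ∈ Finset.range k, fext p n := by
  rw [topSum, Finset.sum_filter, sum_fin_eq_sum_range]
  rw [show Finset.range k = (Finset.range d).filter (· < k) by
    ext n; simp; omega]
  rw [Finset.sum_filter]
  refine Finset.sum_congr rfl fun n hn => ?_
  simp only [Finset.mem_range] at hn
  simp [fext, hn, sortPerm]

lemma card_filter_lt (k : ℕ) (hk : k ≤ d) :
    ((Finset.univ.filter (fun i : Fin d => (i : ℕ) < k)).card) = k := by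
  have : (Finset.univ.filter (fun i : Fin d => (i : ℕ) < k))
      = (Finset.range k).attachFin
          (fun m hm => lt_of_lt_of_le (Finset.mem_range.1 hm) hk) := by
    ext i; simp [Finset.mem_attachFin]
  rw [this, Finset.card_attachFin, Finset.card_range]

lemma abel_aux (a b c : ℕ → ℝ) (n : ℕ)
    (ha : ∀ k, k + 1 ≤ n → a (k + 1) ≤ a k)
    (hD : ∀ k, k ≤ n → ∑ i ∈ Finset.range k, b i ≤ ∑ i ∈ Finset.range k, c i) :
    ∑ i ∈ Finset.range n, a i * (b i - c i)
      ≤ a n * (∑ i ∈ Finset.range n, b i - ∑ i ∈ Finset.range n, c i) := by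
  induction n with
  | zero => simp
  | succ m ih =>
    have h1 := ih (fun k hk => ha k (by omega)) (fun k hk => hD k (by omega))
    have hDm1 := hD (m + 1) le_rfl
    have ham : a (m + 1) ≤ a m := ha m le_rfl
    rw [Finset.sum_range_succ, Finset.sum_range_succ, Finset.sum_range_succ]
    rw [Finset.sum_range_succ, Finset.sum_range_succ] at hDm1
    nlinarith [h1, hDm1, ham]

lemma monovary_of_antitone (f g : Fin d → ℝ) (hf : Antitone f) (hg : Antitone g) :
    Monovary f g := by
  intro i j hg'
  rcases le_total j i with h | h
  · exact hf h
  · exact absurd hg' (not_lt.2 (hg h))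

lemma topSum_d_eq (p : Fin d → ℝ) : topSum p d = ∑ i, p i := by
  rw [topSum]
  rw [show Finset.univ.filter (fun i : Fin d => (i : ℕ) < d) = Finset.univ by
    ext i; simp [i.isLt]]
  exact Equiv.sum_comp (Tuple.sort fun i => -p i) p

lemma sum_c_mul_le_topSum (p : Fin d → ℝ) (c : Fin d → ℝ) (k : ℕ) (hk : k ≤ d)
    (hc0 : ∀ i, 0 ≤ c i) (hc1 : ∀ i, c i ≤ 1) (hcs : ∑ i, c i = k) :
    ∑ i, c i * p i ≤ topSum p k := by
  rcases Nat.eq_zero_or_pos k with rfl | hk0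
  · have hz : ∀ i ∈ Finset.univ, c i = 0 := by
      intro i _
      have := Finset.sum_eq_zero_iff_of_nonneg (fun i _ => hc0 i) |>.1 (by simpa using hcs)
      exact this i (Finset.mem_univ i)
    have : ∑ i, c i * p i = 0 :=
      Finset.sum_eq_zero fun i hi => by rw [hz i hi, zero_mul]
    rw [this, topSum]
    rw [show Finset.univ.filter (fun i : Fin d => (i : ℕ) < 0) = ∅ by ext i; simp]
    simp
  · set σ := sortPerm p with hσ
    set f : Fin d → ℝ := p ∘ σ with hf
    set c' : Fin d → ℝ := c ∘ σ with hc'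
    have hant : Antitone f := antitone_sorted p
    have hkd : k - 1 < d := by omega
    set t : ℝ := f ⟨k - 1, hkd⟩ with ht
    set F := Finset.univ.filter (fun i : Fin d => (i : ℕ) < k) with hF
    have hcard : F.card = k := card_filter_lt k hk
    have hsum1 : ∑ i, c i * p i = ∑ i, c' i * f i :=
      (Equiv.sum_comp σ (fun j => c j * p j)).symm
    have hts : topSum p k = ∑ i ∈ F, f i := rfl
    have hsplit : ∑ i, c' i * f i = ∑ i ∈ F, c' i * f i + ∑ i ∈ Fᶜ, c' i * f i := by
      rw [hF, Finset.compl_filter]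
      exact (Finset.sum_filter_add_sum_filter_not Finset.univ _ (fun i => c' i * f i)).symm
    have hb1 : ∀ i ∈ F, c' i * f i ≤ f i + (c' i - 1) * t := by
      intro i hi
      have hik : (i : ℕ) < k := by simpa [hF] using hi
      have hle : i ≤ (⟨k - 1, hkd⟩ : Fin d) := by
        rw [Fin.le_def]; simp; omega
      have hft : t ≤ f i := hant hle
      have h1 : c' i - 1 ≤ 0 := by have := hc1 (σ i); simp [hc']; linarith
      nlinarith
    have hb2 : ∀ i ∈ Fᶜ, c' i * f i ≤ c' i * t := by
      intro i hi
      have hik : ¬ (i : ℕ) < k := by simpa [hF] using hi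
      have hle : (⟨k - 1, hkd⟩ : Fin d) ≤ i := by
        rw [Fin.le_def]; simp; omega
      have hft : f i ≤ t := hant hle
      exact mul_le_mul_of_nonneg_left hft (hc0 (σ i))
    have hsum2 : ∑ i ∈ F, (f i + (c' i - 1) * t) + ∑ i ∈ Fᶜ, c' i * t
        = ∑ i ∈ F, f i + ((∑ i, c' i) - k) * t := by
      rw [Finset.sum_add_distrib]
      have h1 : ∑ i ∈ F, (c' i - 1) * t = ((∑ i ∈ F, c' i) - k) * t := by
        rw [← Finset.sum_mul, Finset.sum_sub_distrib, Finset.sum_const, hcard]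
        simp
      have h2 : ∑ i ∈ Fᶜ, c' i * t = (∑ i ∈ Fᶜ, c' i) * t := by
        rw [Finset.sum_mul]
      have h3 : ∑ i ∈ F, c' i + ∑ i ∈ Fᶜ, c' i = ∑ i, c' i := by
        rw [hF, Finset.compl_filter]
        exact Finset.sum_filter_add_sum_filter_not Finset.univ _ c' 
      rw [h1, h2]
      linear_combination t * h3
    have hcs' : ∑ i, c' i = k := by
      rw [hc']
      rw [show ∑ i, (c ∘ σ) i = ∑ i, c i from Equiv.sum_comp σ c, hcs]
    calc ∑ i, c i * p i = ∑ i ∈ F, c' i * f i + ∑ i ∈ Fᶜ, c' i * f i := by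
            rw [hsum1, hsplit]
      _ ≤ ∑ i ∈ F, (f i + (c' i - 1) * t) + ∑ i ∈ Fᶜ, c' i * t :=
            add_le_add (Finset.sum_le_sum hb1) (Finset.sum_le_sum hb2)
      _ = ∑ i ∈ F, f i + ((∑ i, c' i) - k) * t := hsum2
      _ = topSum p k := by rw [hcs', hts]; ring

lemma forward_dir (p q : Fin d → ℝ) (Λ : Matrix (Fin d) (Fin d) ℝ)
    (hΛ : IsBistochastic Λ) (hΛp : Λ.mulVec p = q) : Majorizes p q := by
  obtain ⟨hnn, hrow, hcol⟩ := hΛ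
  intro k hk
  set σq : Equiv.Perm (Fin d) := Tuple.sort (fun i => -q i) with hσq
  set F := Finset.univ.filter (fun i : Fin d => (i : ℕ) < k) with hF
  set S := F.image σq with hS
  have hcardF : F.card = k := card_filter_lt k hk
  have hcardS : S.card = k := by
    rw [hS, Finset.card_image_of_injective _ σq.injective, hcardF]
  have h1 : topSum q k = ∑ j ∈ S, q j := by
    rw [hS, Finset.sum_image (fun i _ j _ h => σq.injective h)]
    rfl
  set c : Fin d → ℝ := fun i => ∑ j ∈ S, Λ j i with hc
  have h2 : ∑ j ∈ S, q j = ∑ i, c i * p i := by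
    rw [← hΛp]
    simp only [Matrix.mulVec, dotProduct]
    rw [Finset.sum_comm]
    refine Finset.sum_congr rfl fun i _ => ?_
    rw [hc, Finset.sum_mul]
  have hc0 : ∀ i, 0 ≤ c i := fun i => Finset.sum_nonneg fun j _ => hnn j i
  have hc1 : ∀ i, c i ≤ 1 := by
    intro i
    rw [hc]
    calc ∑ j ∈ S, Λ j i ≤ ∑ j, Λ j i :=
          Finset.sum_le_sum_of_subset_of_nonneg (Finset.subset_univ S)
            (fun j _ _ => hnn j i)
      _ = 1 := hcol i
  have hcs : ∑ i, c i = k := by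
    rw [hc, Finset.sum_comm]
    rw [Finset.sum_congr rfl fun j _ => hrow j]
    rw [Finset.sum_const, hcardS, nsmul_eq_mul, mul_one]
  rw [h1, h2]
  exact sum_c_mul_le_topSum p c k hk hc0 hc1 hcs

lemma permMatrix_mulVec (σ : Equiv.Perm (Fin d)) (p : Fin d → ℝ) :
    (σ.permMatrix ℝ).mulVec p = fun i => p (σ i) := by
  funext i
  simp [Matrix.mulVec, dotProduct, Equiv.Perm.permMatrix, PEquiv.toMatrix,
    Equiv.toPEquiv, Finset.sum_ite_eq]

lemma sum_mul_le_sorted (c q : Fin d → ℝ) :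
    ∑ i, c i * q i ≤ ∑ i, (c ∘ sortPerm c) i * (q ∘ sortPerm q) i := by
  set σc := sortPerm c
  set σq := sortPerm q
  set π : Equiv.Perm (Fin d) := σc.trans σq.symm with hπ
  have hmono : Monovary (c ∘ σc) (q ∘ σq) :=
    monovary_of_antitone _ _ (antitone_sorted c) (antitone_sorted q)
  have h := (hmono.monovaryOn (↑(Finset.univ : Finset (Fin d)))).sum_mul_comp_perm_le_sum_mul
    (σ := π) (by rw [Finset.coe_univ]; exact Set.subset_univ _)
  calc ∑ i, c i * q i = ∑ i, (c ∘ σc) i * (q ∘ σq) (π i) := by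
        rw [← Equiv.sum_comp σc (fun j => c j * q j)]
        refine Finset.sum_congr rfl fun i _ => ?_
        simp [hπ, Function.comp]
    _ ≤ ∑ i, (c ∘ σc) i * (q ∘ σq) i := h

lemma sorted_dot_le (p q c : Fin d → ℝ) (hd : 0 < d) (hmaj : Majorizes p q)
    (hsum : ∑ i, q i = ∑ i, p i) :
    ∑ i, (c ∘ sortPerm c) i * (q ∘ sortPerm q) i
      ≤ ∑ i, (c ∘ sortPerm c) i * (p ∘ sortPerm p) i := by
  set a : ℕ → ℝ := fun n => (c ∘ sortPerm c) ⟨min n (d - 1), by omega⟩ with ha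
  have hantc : Antitone (c ∘ sortPerm c) := antitone_sorted c
  have hA : ∀ k, k + 1 ≤ d → a (k + 1) ≤ a k := by
    intro k hk
    exact hantc (Fin.mk_le_mk.2 (by omega))
  have hD : ∀ k, k ≤ d → ∑ i ∈ Finset.range k, fext q i ≤ ∑ i ∈ Finset.range k, fext p i := by
    intro k hk
    rw [← topSum_eq q k hk, ← topSum_eq p k hk]
    exact hmaj k hk
  have habel := abel_aux a (fext q) (fext p) d hA hD
  have hEq : ∑ i ∈ Finset.range d, fext q i = ∑ i ∈ Finset.range d, fext p i := by
    rw [← topSum_eq q d le_rfl, ← topSum_eq p d le_rfl, topSum_d_eq, topSum_d_eq, hsum]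
  rw [hEq, sub_self, mul_zero] at habel
  have hL : ∑ i ∈ Finset.range d, a i * (fext q i - fext p i)
      = ∑ i, (c ∘ sortPerm c) i * ((q ∘ sortPerm q) i - (p ∘ sortPerm p) i) := by
    rw [_root_.sum_fin_eq_sum_range (fun i => (c ∘ sortPerm c) i * ((q ∘ sortPerm q) i - (p ∘ sortPerm p) i))]
    refine Finset.sum_congr rfl fun n hn => ?_
    have hnd : n < d := Finset.mem_range.1 hn
    have hmin : min n (d - 1) = n := by omega
    simp only [hnd, dif_pos, ha, fext, hmin]
    rfl
  rw [hL] at habel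
  have := Finset.sum_sub_distrib (s := (Finset.univ : Finset (Fin d)))
    (f := fun i => (c ∘ sortPerm c) i * (q ∘ sortPerm q) i)
    (g := fun i => (c ∘ sortPerm c) i * (p ∘ sortPerm p) i)
  have hexp : ∑ i, (c ∘ sortPerm c) i * ((q ∘ sortPerm q) i - (p ∘ sortPerm p) i)
      = ∑ i, (c ∘ sortPerm c) i * (q ∘ sortPerm q) i
        - ∑ i, (c ∘ sortPerm c) i * (p ∘ sortPerm p) i := by
    rw [← this]
    exact Finset.sum_congr rfl fun i _ => by ring
  linarith [habel, hexp.symm.le, hexp.le]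

/-- There exists a bistochastic matrix mapping `p` to `q` iff `p` majorizes `q`. -/
theorem stmt0 {d : ℕ} (p q : Fin d → ℝ) (hp : IsProbVec p) (hq : IsProbVec q) :
    (∃ Λ : Matrix (Fin d) (Fin d) ℝ, IsBistochastic Λ ∧ Λ.mulVec p = q) ↔ Majorizes p q := by
  constructor
  · rintro ⟨Λ, hΛ, hΛp⟩
    exact forward_dir p q Λ hΛ hΛp
  · intro hmaj
    by_contra hno
    have hd : 0 < d := by
      rcases Nat.eq_zero_or_pos d with rfl | h
      · obtain ⟨_, h2⟩ := hp
        simp at h2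
      · exact h
    set L : Matrix (Fin d) (Fin d) ℝ →ₗ[ℝ] (Fin d → ℝ) :=
      { toFun := fun M => M.mulVec p
        map_add' := fun M N => Matrix.add_mulVec M N p
        map_smul' := fun r M => by simp [Matrix.smul_mulVec] } with hL
    set K : Set (Fin d → ℝ) := L '' (doublyStochastic ℝ (Fin d) : Set _) with hK
    have hKhull : K = convexHull ℝ
        (L '' {M | ∃ σ : Equiv.Perm (Fin d), σ.permMatrix ℝ = M}) := by
      rw [hK, ← L.image_convexHull, doublyStochastic_eq_convexHull_permMatrix]
    have hfin : (L '' {M | ∃ σ : Equiv.Perm (Fin d), σ.permMatrix ℝ = M}).Finite := by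
      have h0 : {M | ∃ σ : Equiv.Perm (Fin d), σ.permMatrix ℝ = M}
          = Set.range (fun σ : Equiv.Perm (Fin d) => σ.permMatrix ℝ) := rfl
      rw [h0]
      exact (Set.finite_range _).image L
    have hconv : Convex ℝ K := hKhull ▸ convex_convexHull ℝ _
    have hclosed : IsClosed K := hKhull ▸ (hfin.isCompact_convexHull ℝ).isClosed
    have hqK : q ∉ K := by
      rintro ⟨M, hM, hMq⟩
      exact hno ⟨M, mem_doublyStochastic_iff_sum.1 hM, hMq⟩
    obtain ⟨f, u, hfa, hfq⟩ := geometric_hahn_banach_closed_point hconv hclosed hqK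
    set c : Fin d → ℝ := fun i => f (fun j => if i = j then 1 else 0) with hc
    have hfx : ∀ x : Fin d → ℝ, f x = ∑ i, x i * c i := by
      intro x
      conv_lhs => rw [pi_eq_sum_univ x]
      rw [map_sum]
      exact Finset.sum_congr rfl fun i _ => by rw [map_smul]; simp [hc, smul_eq_mul]
    set τ : Equiv.Perm (Fin d) := (sortPerm c).symm.trans (sortPerm p) with hτ
    have hx0 : (fun i => p (τ i)) ∈ K :=
      ⟨τ.permMatrix ℝ, permMatrix_mem_doublyStochastic, permMatrix_mulVec τ p⟩
    have h1 : f (fun i => p (τ i)) < u := hfa _ hx0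
    have heq : ∑ i, (c ∘ sortPerm c) i * (p ∘ sortPerm p) i = f (fun i => p (τ i)) := by
      rw [hfx]
      rw [← Equiv.sum_comp (sortPerm c) (fun i => p (τ i) * c i)]
      refine Finset.sum_congr rfl fun i _ => ?_
      simp [hτ, Function.comp, mul_comm]
    have h2 : f q ≤ f (fun i => p (τ i)) := by
      rw [hfx q]
      calc ∑ i, q i * c i = ∑ i, c i * q i :=
            Finset.sum_congr rfl (fun i _ => mul_comm _ _)
        _ ≤ ∑ i, (c ∘ sortPerm c) i * (q ∘ sortPerm q) i := sum_mul_le_sorted c q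
        _ ≤ ∑ i, (c ∘ sortPerm c) i * (p ∘ sortPerm p) i :=
            sorted_dot_le p q c hd hmaj (by rw [hq.2, hp.2])
        _ = f _ := heq
    linarith
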